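/- Let q > 1 and α > 0 be real, and set p = q^{α+1/2}, Q = q^{1/2}. Then the quantum R matrix Ř² satisfies the braid-form quantum Yang–Baxter equation: (Ř² ⊗ I₄)(I₄ ⊗ Ř²)(Ř² ⊗ I₄) = (I₄ ⊗ Ř²)(Ř² ⊗ I₄)(I₄ ⊗ Ř²), an identity of 64×64 complex matrices. -/

import Mathlib

open Matrix

noncomputable section

/-- The elementary matrix `E(a,b;c,d)` on `ℂ⁴ ⊗ ℂ⁴`. -/
def E (a b c d : Fin 4) : Matrix (Fin 4 × Fin 4) (Fin 4 × Fin 4) ℂ :=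
  Matrix.single (a, b) (c, d) 1

/-- `M ⊗ I₄`, acting on the first two factors of `ℂ⁴ ⊗ ℂ⁴ ⊗ ℂ⁴`. -/
def op12 (M : Matrix (Fin 4 × Fin 4) (Fin 4 × Fin 4) ℂ) :
    Matrix (Fin 4 × Fin 4 × Fin 4) (Fin 4 × Fin 4 × Fin 4) ℂ :=
  Matrix.of fun x y => M (x.1, x.2.1) (y.1, y.2.1) * (if x.2.2 = y.2.2 then 1 else 0)

/-- `I₄ ⊗ M`, acting on the last two factors of `ℂ⁴ ⊗ ℂ⁴ ⊗ ℂ⁴`. -/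
def op23 (M : Matrix (Fin 4 × Fin 4) (Fin 4 × Fin 4) ℂ) :
    Matrix (Fin 4 × Fin 4 × Fin 4) (Fin 4 × Fin 4 × Fin 4) ℂ :=
  Matrix.of fun x y => (if x.1 = y.1 then 1 else 0) * M (x.2.1, x.2.2) (y.2.1, y.2.2)

/-- The left quantum partial trace `T(C, M)_{a,b} = Σ_{c,d} C_{d,c} M_{(c,a),(d,b)}`. -/
def ptrace (C : Matrix (Fin 4) (Fin 4) ℂ) (M : Matrix (Fin 4 × Fin 4) (Fin 4 × Fin 4) ℂ) :
    Matrix (Fin 4) (Fin 4) ℂ :=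
  Matrix.of fun a b => ∑ c : Fin 4, ∑ d : Fin 4, C d c * M (c, a) (d, b)

/-- The quantum R matrix `Ř²` (Case 2), with real parameters `p, Q`
(indices shifted from 1–4 to 0–3). -/
def R2 (p Q : ℝ) : Matrix (Fin 4 × Fin 4) (Fin 4 × Fin 4) ℂ :=
  E 0 0 0 0
  - ((p ^ 2 * Q⁻¹ ^ 2 : ℝ) : ℂ) • (E 1 1 1 1 + E 2 2 2 2)
  + ((p ^ 4 : ℝ) : ℂ) • E 3 3 3 3
  - ((p * Q⁻¹ * (p * Q⁻¹ - p⁻¹ * Q) : ℝ) : ℂ) • E 1 0 1 0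
  + ((p ^ 3 * Q⁻¹ * (p * Q - p⁻¹ * Q⁻¹) : ℝ) : ℂ) • E 3 2 3 2
  + ((p * Q⁻¹ : ℝ) : ℂ) • (E 0 1 1 0 + E 0 2 2 0 + E 1 0 0 1 + E 2 0 0 2)
  + ((p ^ 3 * Q⁻¹ : ℝ) : ℂ) • (E 1 3 3 1 + E 2 3 3 2 + E 3 1 1 3 + E 3 2 2 3)
  + ((p ^ 2 * Q⁻¹ ^ 2 : ℝ) : ℂ) • (E 0 3 3 0 + E 3 0 0 3)
  - ((p ^ 2 : ℝ) : ℂ) • (E 1 2 2 1 + E 2 1 1 2)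
  - ((p ^ 2 * Q⁻¹ * Real.sqrt ((p * Q⁻¹ - p⁻¹ * Q) * (p * Q - p⁻¹ * Q⁻¹)) : ℝ) : ℂ) •
      (E 3 0 1 2 + E 1 2 3 0)

def E3 (a b c d e f : Fin 4) : Matrix (Fin 4 × Fin 4 × Fin 4) (Fin 4 × Fin 4 × Fin 4) ℂ :=
  Matrix.single (a, b, c) (d, e, f) 1
theorem E3_mul (a b c d e f a' b' c' d' e' f' : Fin 4) :
    E3 a b c d e f * E3 a' b' c' d' e' f' =
      if (d, e, f) = (a', b', c') then E3 a b c d' e' f' else 0 := by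
  unfold E3
  split_ifs with h
  · rw [← h]
    rw [Matrix.single_mul_single_same 1 (a,b,c) (d,e,f) (d',e',f') 1, one_mul]
  · exact Matrix.single_mul_single_of_ne 1 _ _ _ h 1
theorem stdBM_apply {m n : Type*} [DecidableEq m] [DecidableEq n]
    (i : m) (j : n) (a : ℂ) (i' : m) (j' : n) :
    Matrix.single i j a i' j' = if i = i' ∧ j = j' then a else 0 := rfl

theorem opB (a b c d : Fin 4) :
    op12 (E a b c d) = ∑ k : Fin 4, E3 a b k c d k := by
  ext ⟨x1, x2, x3⟩ ⟨y1, y2, y3⟩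
  rw [Matrix.sum_apply]
  simp only [op12, E, E3, Matrix.of_apply, stdBM_apply, Prod.mk.injEq]
  have hc : ∀ k : Fin 4,
      (((a = x1 ∧ b = x2 ∧ k = x3) ∧ c = y1 ∧ d = y2 ∧ k = y3) : Prop) ↔
      (k = x3 ∧ (((a = x1 ∧ b = x2) ∧ c = y1 ∧ d = y2) ∧ x3 = y3)) := by
    intro k; constructor
    · rintro ⟨⟨h1, h2, rfl⟩, h4, h5, rfl⟩; tauto
    · rintro ⟨rfl, ⟨⟨h1, h2⟩, h3, h4⟩, rfl⟩; tauto
  simp only [hc, ite_and]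
  rw [Finset.sum_ite_eq' Finset.univ x3]
  simp only [Finset.mem_univ, if_true]
  split_ifs <;> simp_all

theorem opC (e f g h : Fin 4) :
    op23 (E e f g h) = ∑ k : Fin 4, E3 k e f k g h := by
  ext ⟨x1, x2, x3⟩ ⟨y1, y2, y3⟩
  rw [Matrix.sum_apply]
  simp only [op23, E, E3, Matrix.of_apply, stdBM_apply, Prod.mk.injEq]
  have hc : ∀ k : Fin 4,
      (((k = x1 ∧ e = x2 ∧ f = x3) ∧ k = y1 ∧ g = y2 ∧ h = y3) : Prop) ↔
      (k = x1 ∧ (((e = x2 ∧ f = x3) ∧ g = y2 ∧ h = y3) ∧ x1 = y1)) := by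
    intro k; constructor
    · rintro ⟨⟨rfl, h2, h3⟩, rfl, h5, h6⟩; tauto
    · rintro ⟨rfl, ⟨⟨h1, h2⟩, h3, h4⟩, rfl⟩; tauto
  simp only [hc, ite_and]
  rw [Finset.sum_ite_eq' Finset.univ x1]
  simp only [Finset.mem_univ, if_true]
  split_ifs <;> simp_all

theorem L1 (a b c d e f g h : Fin 4) :
    op12 (E a b c d) * op23 (E e f g h) = if d = e then E3 a b f c g h else 0 := by
  rw [opB, opC, Finset.sum_mul_sum]
  have hc : ∀ k m : Fin 4, (((c,d,k) = (m,e,f)) : Prop) ↔ (m = c ∧ (k = f ∧ d = e)) := by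
    intro k m; simp [Prod.ext_iff]; tauto
  simp only [E3_mul, hc, ite_and, Finset.sum_ite_eq', Finset.mem_univ, if_true]

theorem L2 (u v w x y z a b c d : Fin 4) :
    E3 u v w x y z * op12 (E a b c d) = if x = a ∧ y = b then E3 u v w c d z else 0 := by
  rw [opB, Finset.mul_sum]
  have hc : ∀ k : Fin 4, (((x,y,z) = (a,b,k)) : Prop) ↔ (k = z ∧ (x = a ∧ y = b)) := by
    intro k; simp [Prod.ext_iff]; tauto
  simp only [E3_mul, hc, ite_and, Finset.sum_ite_eq', Finset.mem_univ, if_true]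

theorem L3 (e f g h a b c d : Fin 4) :
    op23 (E e f g h) * op12 (E a b c d) = if g = b then E3 a e f c d h else 0 := by
  rw [opB, opC, Finset.sum_mul_sum]
  have hc : ∀ k m : Fin 4, (((k,g,h) = (a,b,m)) : Prop) ↔ (m = h ∧ (k = a ∧ g = b)) := by
    intro k m; simp [Prod.ext_iff]; tauto
  simp only [E3_mul, hc, ite_and, Finset.sum_ite_eq', Finset.mem_univ, if_true]

theorem L4 (u v w x y z e f g h : Fin 4) :
    E3 u v w x y z * op23 (E e f g h) = if y = e ∧ z = f then E3 u v w x g h else 0 := by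
  rw [opC, Finset.mul_sum]
  have hc : ∀ k : Fin 4, (((x,y,z) = (k,e,f)) : Prop) ↔ (k = x ∧ (y = e ∧ z = f)) := by
    intro k; simp [Prod.ext_iff]; tauto
  simp only [E3_mul, hc, ite_and, Finset.sum_ite_eq', Finset.mem_univ, if_true]

def Rm (A B S : ℂ) : Matrix (Fin 4 × Fin 4) (Fin 4 × Fin 4) ℂ :=
  (1 : ℂ) • E 0 0 0 0
  + (-(A^2)) • E 1 1 1 1 + (-(A^2)) • E 2 2 2 2
  + (A^2*B^2) • E 3 3 3 3
  + (-(A^2 - 1)) • E 1 0 1 0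
  + (A^2*(B^2 - 1)) • E 3 2 3 2
  + A • E 0 1 1 0 + A • E 0 2 2 0 + A • E 1 0 0 1 + A • E 2 0 0 2
  + (A^2*B) • E 1 3 3 1 + (A^2*B) • E 2 3 3 2 + (A^2*B) • E 3 1 1 3 + (A^2*B) • E 3 2 2 3
  + (A^2) • E 0 3 3 0 + (A^2) • E 3 0 0 3
  + (-(A*B)) • E 1 2 2 1 + (-(A*B)) • E 2 1 1 2
  + (-S) • E 3 0 1 2 + (-S) • E 1 2 3 0

theorem op12_add (M N : Matrix (Fin 4 × Fin 4) (Fin 4 × Fin 4) ℂ) :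
    op12 (M + N) = op12 M + op12 N := by
  ext x y; simp only [op12, Matrix.add_apply, Matrix.of_apply, add_mul]
theorem op12_smul (c : ℂ) (M : Matrix (Fin 4 × Fin 4) (Fin 4 × Fin 4) ℂ) :
    op12 (c • M) = c • op12 M := by
  ext x y; simp [op12, mul_assoc]
theorem op23_add (M N : Matrix (Fin 4 × Fin 4) (Fin 4 × Fin 4) ℂ) :
    op23 (M + N) = op23 M + op23 N := by
  ext x y; simp only [op23, Matrix.add_apply, Matrix.of_apply, mul_add]
theorem op23_smul (c : ℂ) (M : Matrix (Fin 4 × Fin 4) (Fin 4 × Fin 4) ℂ) :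
    op23 (c • M) = c • op23 M := by
  ext x y; simp only [op23, Matrix.smul_apply, Matrix.of_apply, smul_eq_mul]; ring

set_option maxHeartbeats 4000000 in
theorem aux (A B S : ℂ) (hS : S^2 = A^2*(A^2-1)*(B^2-1)) :
    op12 (Rm A B S) * op23 (Rm A B S) * op12 (Rm A B S) =
      op23 (Rm A B S) * op12 (Rm A B S) * op23 (Rm A B S) := by
  simp only [Rm, op12_add, op12_smul, op23_add, op23_smul, add_mul, mul_add,
    smul_mul_assoc, mul_smul_comm, L1, L2, L3, L4, Fin.reduceEq, and_true, and_false,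
    true_and, false_and, and_self, reduceIte, ite_true, ite_false,
    smul_zero, mul_zero, zero_mul, add_zero, zero_add, smul_add]
  match_scalars <;>
    first
      | ring1
      | linear_combination hS
      | linear_combination (A^2 : ℂ) * hS
      | linear_combination (-(A^2*B^2) : ℂ) * hS
      | linear_combination (-(A^2) : ℂ) * hS

/-- The quantum R matrix `Ř²` satisfies the braid-form quantum Yang–Baxter equation. -/
theorem R2_QYBE (q α : ℝ) (hq : 1 < q) (hα : 0 < α)
    (p Q : ℝ) (hp : p = q ^ (α + 1 / 2)) (hQ : Q = q ^ ((1 : ℝ) / 2)) :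
    op12 (R2 p Q) * op23 (R2 p Q) * op12 (R2 p Q) =
      op23 (R2 p Q) * op12 (R2 p Q) * op23 (R2 p Q) := by

  have hq0 : (0 : ℝ) < q := lt_trans one_pos hq
  have hp0 : (0 : ℝ) < p := by rw [hp]; exact Real.rpow_pos_of_pos hq0 _
  have hQ0 : (0 : ℝ) < Q := by rw [hQ]; exact Real.rpow_pos_of_pos hq0 _
  have hpc : (p : ℂ) ≠ 0 := by exact_mod_cast hp0.ne'
  have hQc : (Q : ℂ) ≠ 0 := by exact_mod_cast hQ0.ne'
  -- key positivity facts
  have ha1 : 1 ≤ p * Q⁻¹ := by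
    rw [hp, hQ, ← Real.rpow_neg hq0.le, ← Real.rpow_add hq0]
    calc (1:ℝ) = q ^ (0:ℝ) := (Real.rpow_zero q).symm
    _ ≤ q ^ (α + 1/2 + -(1/2)) := by
        apply Real.rpow_le_rpow_of_exponent_le hq.le; linarith
  have hb1 : 1 ≤ p * Q := by
    rw [hp, hQ, ← Real.rpow_add hq0]
    calc (1:ℝ) = q ^ (0:ℝ) := (Real.rpow_zero q).symm
    _ ≤ q ^ (α + 1/2 + 1/2) := by
        apply Real.rpow_le_rpow_of_exponent_le hq.le; linarith
  have hinva : p⁻¹ * Q = (p * Q⁻¹)⁻¹ := by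
    field_simp
  have hinvb : p⁻¹ * Q⁻¹ = (p * Q)⁻¹ := by
    rw [mul_inv]
  have hu : 0 ≤ (p * Q⁻¹ - p⁻¹ * Q) * (p * Q - p⁻¹ * Q⁻¹) := by
    rw [hinva, hinvb]
    have k1 : (p * Q⁻¹)⁻¹ ≤ p * Q⁻¹ := le_trans (inv_le_one_of_one_le₀ ha1) ha1
    have k2 : (p * Q)⁻¹ ≤ p * Q := le_trans (inv_le_one_of_one_le₀ hb1) hb1
    exact mul_nonneg (sub_nonneg.2 k1) (sub_nonneg.2 k2)
  set A : ℂ := ((p * Q⁻¹ : ℝ) : ℂ) with hA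
  set B : ℂ := ((p * Q : ℝ) : ℂ) with hB
  set S : ℂ := ((p ^ 2 * Q⁻¹ * Real.sqrt ((p * Q⁻¹ - p⁻¹ * Q) * (p * Q - p⁻¹ * Q⁻¹)) : ℝ) : ℂ)
    with hSdef
  have hS : S ^ 2 = A ^ 2 * (A ^ 2 - 1) * (B ^ 2 - 1) := by
    rw [hSdef, hA, hB]
    have : ((p ^ 2 * Q⁻¹ * Real.sqrt ((p * Q⁻¹ - p⁻¹ * Q) * (p * Q - p⁻¹ * Q⁻¹)) : ℝ))^2
        = (p^2*Q⁻¹)^2 * ((p * Q⁻¹ - p⁻¹ * Q) * (p * Q - p⁻¹ * Q⁻¹)) := by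
      rw [mul_pow, Real.sq_sqrt hu]
    rw [← Complex.ofReal_pow, this]
    have hreal : (p^2*Q⁻¹)^2 * ((p * Q⁻¹ - p⁻¹ * Q) * (p * Q - p⁻¹ * Q⁻¹))
        = (p*Q⁻¹)^2 * ((p*Q⁻¹)^2 - 1) * ((p*Q)^2 - 1) := by
      field_simp
    rw [hreal]
    push_cast
    ring
  have h1 : ((p ^ 2 * Q⁻¹ ^ 2 : ℝ) : ℂ) = A ^ 2 := by rw [hA]; push_cast; ring
  have h2 : ((p ^ 4 : ℝ) : ℂ) = A ^ 2 * B ^ 2 := by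
    rw [hA, hB]; push_cast; field_simp
  have h3 : ((p * Q⁻¹ * (p * Q⁻¹ - p⁻¹ * Q) : ℝ) : ℂ) = A ^ 2 - 1 := by
    rw [hA]; push_cast; field_simp
  have h4 : ((p ^ 3 * Q⁻¹ * (p * Q - p⁻¹ * Q⁻¹) : ℝ) : ℂ) = A ^ 2 * (B ^ 2 - 1) := by
    rw [hA, hB]; push_cast; field_simp
  have h6 : ((p ^ 3 * Q⁻¹ : ℝ) : ℂ) = A ^ 2 * B := by
    rw [hA, hB]; push_cast; field_simp
  have h7 : ((p ^ 2 : ℝ) : ℂ) = A * B := by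
    rw [hA, hB]; push_cast; field_simp
  have hR : R2 p Q = Rm A B S := by
    rw [R2, Rm, h1, h2, h3, h4, h6, h7, ← hA, ← hSdef]
    module
  rw [hR]
  exact aux A B S hS
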